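/- Let λ > 0 and T > 0 and let q : [0,∞) → [0,∞) be measurable and locally integrable. For each n ≥ 1 define by induction f_0(T, y) := ∫_0^T w(y, t) e^{-∫_0^t (q(s)+λ) ds} dt (where w is nonnegative measurable and the shifted versions w(r+·), q(r+·) are used after time shifts) and f_n(T) := ∫_0^T λ e^{-∫_0^{r}(q(s)+λ)ds} f_{n-1}(T - r; shifted by r) dr. If f_{n-1}(T) = ∫_0^T (λ^{n-1} t^{n-1}/(n-1)!) w(t) e^{-∫_0^t (q(s)+λ) ds} dt for all T and all time shifts, then f_n(T) = ∫_0^T (λ^n t^n/n!) w(t) e^{-∫_0^t (q(s)+λ) ds} dt. -/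

import Mathlib

open MeasureTheory intervalIntegral Set

theorem stmt_15 (lam : ℝ) (hlam : 0 < lam) (n : ℕ) (hn : 1 ≤ n)
    (q w : ℝ → ℝ) (hq : Measurable q) (hw : Measurable w)
    (hq0 : ∀ s, 0 ≤ q s) (hw0 : ∀ s, 0 ≤ w s)
    (hqi : MeasureTheory.LocallyIntegrable q) (hwi : MeasureTheory.LocallyIntegrable w)
    (fprev : ℝ → ℝ → ℝ)
    (hprev : ∀ T r : ℝ, 0 ≤ T → 0 ≤ r →
      fprev T r = ∫ t in (0:ℝ)..T,
        lam ^ (n - 1) * t ^ (n - 1) / (Nat.factorial (n - 1)) * w (r + t) *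
          Real.exp (-∫ s in (0:ℝ)..t, (q (r + s) + lam)))
    (T : ℝ) (hT : 0 ≤ T) :
    ∫ r in (0:ℝ)..T, lam * Real.exp (-∫ s in (0:ℝ)..r, (q s + lam)) * fprev (T - r) r =
      ∫ t in (0:ℝ)..T, lam ^ n * t ^ n / (Nat.factorial n) * w t *
        Real.exp (-∫ s in (0:ℝ)..t, (q s + lam)) := by
  have hQi : ∀ a b : ℝ, IntervalIntegrable (fun s => q s + lam) volume a b := by
    intro a b
    exact ((hqi.integrableOn_isCompact isCompact_uIcc).intervalIntegrable).add
      intervalIntegrable_const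
  set E : ℝ → ℝ := fun u => Real.exp (-∫ s in (0:ℝ)..u, (q s + lam)) with hE
  have hEcont : Continuous E :=
    Real.continuous_exp.comp (continuous_primitive hQi 0).neg
  have hE1 : ∀ u : ℝ, 0 ≤ u → E u ≤ 1 := by
    intro u hu
    rw [hE]
    simp only
    rw [Real.exp_le_one_iff, neg_nonpos]
    exact intervalIntegral.integral_nonneg hu (fun s _ => add_nonneg (hq0 s) hlam.le)
  have hEpos : ∀ u, 0 < E u := fun u => Real.exp_pos _
  -- exponential splitting
  have hsplit : ∀ r t : ℝ,
      E r * Real.exp (-∫ s in (0:ℝ)..t, (q (r + s) + lam)) = E (r + t) := by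
    intro r t
    have h1 : (∫ s in (0:ℝ)..t, (q (r + s) + lam)) = ∫ s in r..(r + t), (q s + lam) := by
      have := intervalIntegral.integral_comp_add_left (a := (0:ℝ)) (b := t)
        (fun s => q s + lam) r
      simpa using this
    rw [hE]
    simp only
    rw [h1, ← Real.exp_add, ← neg_add,
      intervalIntegral.integral_add_adjacent_intervals (hQi 0 r) (hQi r (r + t))]
  set c : ℝ := lam ^ (n - 1) / (Nat.factorial (n - 1)) with hc
  have hc0 : 0 ≤ c := by positivity
  set g : ℝ → ℝ → ℝ := fun r u => lam * c * (u - r) ^ (n - 1) * w u * E u with hg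
  -- Step 1
  have step1 : ∀ r : ℝ, 0 ≤ r → r ≤ T →
      lam * E r * fprev (T - r) r = ∫ u in r..T, g r u := by
    intro r hr hrT
    rw [hprev (T - r) r (by linarith) hr, ← intervalIntegral.integral_const_mul]
    have : ∀ t : ℝ, lam * E r * (lam ^ (n - 1) * t ^ (n - 1) / (Nat.factorial (n - 1)) *
        w (r + t) * Real.exp (-∫ s in (0:ℝ)..t, (q (r + s) + lam))) = g r (r + t) := by
      intro t
      rw [hg]
      simp only
      rw [← hsplit r t, add_sub_cancel_left, hc]
      ring
    rw [intervalIntegral.integral_congr (g := fun t => g r (r + t)) (fun t _ => this t)]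
    rw [intervalIntegral.integral_comp_add_left (fun u => g r u) r]
    norm_num
  set S : Set ℝ := Set.Ioc (0:ℝ) T with hS
  have hSm : MeasurableSet S := measurableSet_Ioc
  set G : ℝ → ℝ → ℝ := fun r u => (Set.Ioc r T).indicator (g r) u with hG
  -- Step 3a : rewrite inner integral as integral over S of indicator
  have step3a : ∀ r : ℝ, 0 ≤ r → r ≤ T →
      (∫ u in r..T, g r u) = ∫ u in S, G r u := by
    intro r hr hrT
    rw [intervalIntegral.integral_of_le hrT, hG]
    simp only
    rw [setIntegral_indicator measurableSet_Ioc]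
    congr 1
    rw [hS, Set.Ioc_inter_Ioc]
    congr 1 <;> simp [hr, hrT, max_eq_right, min_self]
  -- integrability for Fubini
  have hwS : IntegrableOn w S := by
    exact (hwi.integrableOn_isCompact isCompact_Icc).mono_set Set.Ioc_subset_Icc_self
  have hgm : Measurable (fun p : ℝ × ℝ => g p.1 p.2) := by
    rw [hg]
    exact ((((measurable_const.mul measurable_const).mul
      ((measurable_snd.sub measurable_fst).pow measurable_const)).mul
      (hw.comp measurable_snd)).mul (hEcont.measurable.comp measurable_snd))
  have hGm : Measurable (Function.uncurry G) := by
    have : Function.uncurry G =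
        {p : ℝ × ℝ | p.1 < p.2 ∧ p.2 ≤ T}.indicator (fun p => g p.1 p.2) := by
      funext p
      simp only [Function.uncurry, hG, Set.indicator_apply, Set.mem_Ioc, Set.mem_setOf_eq]
    rw [this]
    exact hgm.indicator ((measurableSet_lt measurable_fst measurable_snd).inter
      (measurableSet_le measurable_snd measurable_const))
  have hGint : Integrable (Function.uncurry G)
      ((volume.restrict S).prod (volume.restrict S)) := by
    have hbound : Integrable (fun p : ℝ × ℝ => (1:ℝ) * (lam * c * T ^ (n - 1) * w p.2))
        ((volume.restrict S).prod (volume.restrict S)) := by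
      apply MeasureTheory.Integrable.mul_prod (f := fun _ : ℝ => (1:ℝ))
        (g := fun u => lam * c * T ^ (n - 1) * w u)
      · exact integrableOn_const measure_Ioc_lt_top.ne
      · exact (hwS.const_mul _)
    apply Integrable.mono hbound hGm.aestronglyMeasurable
    rw [Measure.prod_restrict]
    filter_upwards [ae_restrict_mem (hSm.prod hSm)] with p hp
    obtain ⟨hp1, hp2⟩ := hp
    rw [hS, Set.mem_Ioc] at hp1 hp2
    simp only [Function.uncurry, hG, Set.indicator_apply, Set.mem_Ioc]
    rw [Real.norm_eq_abs, Real.norm_eq_abs]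
    split_ifs with h
    · rw [hg]
      simp only
      have h1 : (0:ℝ) ≤ p.2 - p.1 := by linarith [h.1]
      have h2 : p.2 - p.1 ≤ T := by linarith [hp1.1, h.2]
      have hE2 : E p.2 ≤ 1 := hE1 p.2 (by linarith [hp2.1])
      have hC : (0:ℝ) ≤ lam * c * T ^ (n - 1) :=
        mul_nonneg (mul_nonneg hlam.le hc0) (pow_nonneg hT _)
      rw [abs_of_nonneg (mul_nonneg (mul_nonneg (mul_nonneg (mul_nonneg hlam.le hc0)
        (pow_nonneg h1 _)) (hw0 p.2)) (hEpos p.2).le),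
        abs_of_nonneg (by rw [one_mul]; exact mul_nonneg hC (hw0 p.2))]
      calc lam * c * (p.2 - p.1) ^ (n - 1) * w p.2 * E p.2
          ≤ lam * c * T ^ (n - 1) * w p.2 * 1 := by
            gcongr <;> first
              | exact hw0 p.2
              | exact pow_le_pow_left₀ h1 h2 _
              | exact hE2
              | exact mul_nonneg hC (hw0 p.2)
              | positivity
        _ = 1 * (lam * c * T ^ (n - 1) * w p.2) := by ring
    · simp only [abs_zero]
      have hC : (0:ℝ) ≤ lam * c * T ^ (n - 1) :=
        mul_nonneg (mul_nonneg hlam.le hc0) (pow_nonneg hT _)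
      rw [abs_of_nonneg (by rw [one_mul]; exact mul_nonneg hC (hw0 p.2)), one_mul]
      exact mul_nonneg hC (hw0 p.2)
  have swap := MeasureTheory.integral_integral_swap hGint
  -- Step 3c
  have step3c : ∀ u ∈ S, (∫ r in S, G r u) = ∫ r in (0:ℝ)..u, g r u := by
    intro u hu
    rw [hS, Set.mem_Ioc] at hu
    have h1 : ∀ r : ℝ, G r u = (Set.Iio u).indicator (fun r => g r u) r := by
      intro r
      by_cases h : r < u <;>
        simp [hG, Set.indicator_apply, Set.mem_Ioc, Set.mem_Iio, h, hu.2]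
    rw [setIntegral_congr_fun hSm (fun r _ => h1 r),
      setIntegral_indicator measurableSet_Iio]
    have h2 : S ∩ Set.Iio u = Set.Ioo 0 u := by
      ext r
      rw [hS]
      simp only [Set.mem_inter_iff, Set.mem_Ioc, Set.mem_Iio, Set.mem_Ioo]
      constructor
      · rintro ⟨⟨a, b⟩, cnd⟩; exact ⟨a, cnd⟩
      · rintro ⟨a, b⟩; exact ⟨⟨a, le_trans b.le hu.2⟩, b⟩
    rw [h2, ← MeasureTheory.integral_Ioc_eq_integral_Ioo,
      intervalIntegral.integral_of_le hu.1.le]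
  -- Step 4
  have step4 : ∀ u : ℝ, 0 ≤ u →
      (∫ r in (0:ℝ)..u, g r u) = lam ^ n * u ^ n / (Nat.factorial n) * w u * E u := by
    intro u hu
    have e1 : (∫ r in (0:ℝ)..u, g r u)
        = ∫ r in (0:ℝ)..u, (lam * c * w u * E u) * (u - r) ^ (n - 1) := by
      apply intervalIntegral.integral_congr
      intro r _
      show g r u = _
      rw [hg]; ring
    have e2 : (∫ r in (0:ℝ)..u, (u - r) ^ (n - 1)) = ∫ x in (0:ℝ)..u, x ^ (n - 1) := by
      have := intervalIntegral.integral_comp_sub_left (a := (0:ℝ)) (b := u)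
        (fun x => x ^ (n - 1)) u
      simpa using this
    rw [e1, intervalIntegral.integral_const_mul, e2, integral_pow, hc]
    set m := n - 1 with hm
    have hnm : n = m + 1 := by omega
    rw [hnm]
    rw [zero_pow (by omega : m + 1 ≠ 0)]
    have hfac : ((m + 1).factorial : ℝ) = (m + 1) * (m.factorial : ℝ) := by
      rw [Nat.factorial_succ]; push_cast; ring
    rw [hfac]
    have hfm : (0:ℝ) < (m.factorial : ℝ) := by positivity
    field_simp
    ring
  -- final chain
  rw [intervalIntegral.integral_of_le hT, intervalIntegral.integral_of_le hT]
  calc ∫ r in Set.Ioc (0:ℝ) T, lam * E r * fprev (T - r) r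
      = ∫ r in S, ∫ u in S, G r u := by
        apply setIntegral_congr_fun hSm
        intro r hr
        rw [hS, Set.mem_Ioc] at hr
        show lam * E r * fprev (T - r) r = ∫ u in S, G r u
        rw [step1 r hr.1.le hr.2, step3a r hr.1.le hr.2]
    _ = ∫ u in S, ∫ r in S, G r u := swap
    _ = ∫ u in S, lam ^ n * u ^ n / (Nat.factorial n) * w u * E u := by
        apply setIntegral_congr_fun hSm
        intro u hu
        show (∫ r in S, G r u) = lam ^ n * u ^ n / (Nat.factorial n) * w u * E u
        rw [step3c u hu, step4 u (le_of_lt hu.1)]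
    _ = ∫ t in Set.Ioc (0:ℝ) T, lam ^ n * t ^ n / (Nat.factorial n) * w t * E t := rfl
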